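/- Let R be a commutative local ring with m = (2) ≠ 0, m² = 0. Then R is self-injective: R is injective as a module over itself. -/

import Mathlib

/-- Let `R` be a commutative local ring with `m = (2) ≠ 0`, `m² = 0`.  Then `R` is
self-injective: `R` is injective as a module over itself. -/
theorem stmt_4 (R : Type*) [CommRing R] [IsLocalRing R]
    (hm : IsLocalRing.maximalIdeal R = Ideal.span {(2 : R)})
    (hne : IsLocalRing.maximalIdeal R ≠ ⊥)
    (hsq : IsLocalRing.maximalIdeal R ^ 2 = ⊥) :
    Module.Injective R R := by
  apply Module.Baer.injective
  intro I g
  -- claim: it suffices to find a with ∀ x ∈ I, g ⟨x,_⟩ = x * a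
  suffices h : ∃ a : R, ∀ (x : R) (mem : x ∈ I), g ⟨x, mem⟩ = x * a by
    obtain ⟨a, ha⟩ := h
    refine ⟨(LinearMap.lsmul R R a).comp (LinearMap.id), fun x mem => ?_⟩
    simp [ha x mem, mul_comm]
  by_cases htop : I = ⊤
  · subst htop
    refine ⟨g ⟨1, trivial⟩, fun x mem => ?_⟩
    have : (⟨x, mem⟩ : (⊤ : Ideal R)) = x • ⟨1, trivial⟩ := by
      ext; simp
    rw [this, map_smul, smul_eq_mul]
  · have hIle : I ≤ IsLocalRing.maximalIdeal R := IsLocalRing.le_maximalIdeal htop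
    by_cases hbot : I = ⊥
    · subst hbot
      refine ⟨0, fun x mem => ?_⟩
      have hx : x = 0 := by simpa using mem
      subst hx
      have : (⟨(0:R), mem⟩ : (⊥ : Ideal R)) = 0 := rfl
      simp [this]
    · -- I = maximal ideal
      have hIm : I = IsLocalRing.maximalIdeal R := by
        refine le_antisymm hIle ?_
        obtain ⟨x, hxI, hx0⟩ := Submodule.exists_mem_ne_zero_of_ne_bot hbot
        have hxm : x ∈ Ideal.span {(2:R)} := hm ▸ hIle hxI
        obtain ⟨r, hr⟩ := Ideal.mem_span_singleton'.mp hxm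
        have hrunit : IsUnit r := by
          by_contra hning
          have hrm : r ∈ IsLocalRing.maximalIdeal R := hning
          have h2m : (2:R) ∈ IsLocalRing.maximalIdeal R := by
            rw [hm]; exact Ideal.mem_span_singleton_self _
          have : r * 2 ∈ IsLocalRing.maximalIdeal R ^ 2 := by
            rw [sq]; exact Ideal.mul_mem_mul hrm h2m
          rw [hsq] at this
          exact hx0 (hr ▸ (by simpa using this))
        obtain ⟨u, hu⟩ := hrunit
        have h2I : (2:R) ∈ I := by
          have : ((u⁻¹ : Rˣ) : R) * x ∈ I := Ideal.mul_mem_left _ _ hxI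
          have hx2 : ((u⁻¹ : Rˣ) : R) * x = 2 := by
            rw [← hr, ← hu, ← mul_assoc]
            simp
          rwa [hx2] at this
        rw [hm]
        exact (Ideal.span_singleton_le_iff_mem _).mpr h2I
      subst hIm
      have h2m : (2:R) ∈ IsLocalRing.maximalIdeal R := by
        rw [hm]; exact Ideal.mem_span_singleton_self _
      set c := g ⟨2, h2m⟩ with hc
      have h2c : 2 * c = 0 := by
        have h4 : (2:R) * 2 = 0 := by
          have : (2:R) * 2 ∈ IsLocalRing.maximalIdeal R ^ 2 := by
            rw [sq]; exact Ideal.mul_mem_mul h2m h2m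
          rw [hsq] at this; simpa using this
        have : (2:R) • (⟨2, h2m⟩ : IsLocalRing.maximalIdeal R) = 0 := by
          ext; simpa using h4
        calc 2 * c = g ((2:R) • ⟨2, h2m⟩) := by rw [map_smul]; simp [hc, smul_eq_mul]
        _ = 0 := by rw [this, map_zero]
      have hcm : c ∈ Ideal.span {(2:R)} := by
        rw [← hm]
        by_contra hcu
        have : IsUnit c := IsLocalRing.notMem_maximalIdeal.mp hcu
        obtain ⟨u, hu⟩ := this
        have : (2:R) = 0 := by
          have := congrArg (· * ((u⁻¹ : Rˣ) : R)) h2c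
          simpa [← hu, mul_assoc] using this
        apply hne
        rw [hm, this, Ideal.span_singleton_eq_bot]
      obtain ⟨a, ha⟩ := Ideal.mem_span_singleton'.mp hcm
      refine ⟨a, fun x mem => ?_⟩
      have hxm : x ∈ Ideal.span {(2:R)} := hm ▸ mem
      obtain ⟨s, hs⟩ := Ideal.mem_span_singleton'.mp hxm
      have : (⟨x, mem⟩ : IsLocalRing.maximalIdeal R) = s • ⟨2, h2m⟩ := by
        ext; simpa using hs.symm
      rw [this, map_smul, smul_eq_mul, ← hc, ← ha, ← hs]
      ring
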